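/- Consider a single arc as in the context. For all 0 ≤ θ₁ < θ₂ with F⁺(θ₂) − F⁺(θ₁) = 0 and z(θ₂ + τ) > 0, one has T(θ₁) = T(θ₂); more precisely, q(θ₁) = q(θ₂) + θ₂ − θ₁. -/
import Mathlib


open MeasureTheory
open scoped Classical

noncomputable section

/-- Cumulative flow `F(θ) = ∫₀^θ f` (which vanishes for `θ < 0` whenever `f`
vanishes on negatives). -/
def Fcum (f : ℝ → ℝ) (θ : ℝ) : ℝ := ∫ ξ in (0:ℝ)..θ, f ξ

/-- The queue `z(θ) = F⁺(θ − τ) − F⁻(θ)`. -/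
def queueLen (τ : ℝ) (fplus fminus : ℝ → ℝ) (θ : ℝ) : ℝ :=
  Fcum fplus (θ - τ) - Fcum fminus θ

/-- A single arc of a feasible flow over time: transit time `τ ≥ 0`, outflow
capacity `ν > 0`, inflow rate `fplus` and outflow rate `fminus` (locally integrable,
bounded, nonnegative, vanishing on negative times) with `fminus ≤ ν`, nonnegative
queues, and a lower bound `ε > 0` for the outflow rate whenever the queue is
positive (so that the waiting time is well-defined). -/
structure Arc where
  τ : ℝ
  ν : ℝ
  ε : ℝ
  fplus : ℝ → ℝ
  fminus : ℝ → ℝ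
  τ_nonneg : 0 ≤ τ
  ν_pos : 0 < ν
  ε_pos : 0 < ε
  fplus_nonneg : ∀ θ, 0 ≤ fplus θ
  fminus_nonneg : ∀ θ, 0 ≤ fminus θ
  fplus_zero_neg : ∀ θ, θ < 0 → fplus θ = 0
  fminus_zero_neg : ∀ θ, θ < 0 → fminus θ = 0
  fplus_bdd : ∃ M, ∀ θ, fplus θ ≤ M
  fplus_li : LocallyIntegrable fplus
  fminus_li : LocallyIntegrable fminus
  fminus_le_cap : ∀ θ, fminus θ ≤ ν
  queue_nonneg : ∀ θ, 0 ≤ θ → 0 ≤ queueLen τ fplus fminus θ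
  outflow_lb : ∀ θ, 0 < queueLen τ fplus fminus θ → ε ≤ fminus θ

namespace Arc

/-- Cumulative inflow `F⁺`. -/
def Fplus (A : Arc) (θ : ℝ) : ℝ := Fcum A.fplus θ

/-- Cumulative outflow `F⁻`. -/
def Fminus (A : Arc) (θ : ℝ) : ℝ := Fcum A.fminus θ

/-- The queue `z`. -/
def z (A : Arc) (θ : ℝ) : ℝ := queueLen A.τ A.fplus A.fminus θ

/-- The waiting time `q(θ)`. -/
def q (A : Arc) (θ : ℝ) : ℝ :=
  sInf {q : ℝ | 0 ≤ q ∧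
    (∫ ξ in (θ + A.τ)..(θ + A.τ + q), A.fminus ξ) = A.z (θ + A.τ)}

/-- The exit time `T(θ) = θ + τ + q(θ)`. -/
def T (A : Arc) (θ : ℝ) : ℝ := θ + A.τ + A.q θ

end Arc

end

/-- **Equal exit times without intermediate inflow.** For a single arc of a feasible
flow over time and all `0 ≤ θ₁ < θ₂` with `F⁺(θ₂) − F⁺(θ₁) = 0` and `z(θ₂ + τ) > 0`,
one has `q(θ₁) = q(θ₂) + θ₂ − θ₁`, and in particular `T(θ₁) = T(θ₂)`. -/
theorem arc_equal_exit_times (A : Arc) (θ₁ θ₂ : ℝ)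
    (h1 : 0 ≤ θ₁) (h12 : θ₁ < θ₂)
    (hF : A.Fplus θ₂ - A.Fplus θ₁ = 0)
    (hz : 0 < A.z (θ₂ + A.τ)) :
    A.q θ₁ = A.q θ₂ + θ₂ - θ₁ ∧ A.T θ₁ = A.T θ₂ := by
  have hInt : ∀ u v : ℝ, IntervalIntegrable A.fminus volume u v := fun u v =>
    (A.fminus_li.integrableOn_isCompact isCompact_uIcc).intervalIntegrable
  have hIntp : ∀ u v : ℝ, IntervalIntegrable A.fplus volume u v := fun u v =>
    (A.fplus_li.integrableOn_isCompact isCompact_uIcc).intervalIntegrable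
  set a := θ₂ + A.τ with ha
  set b := θ₁ + A.τ with hb
  have hFm : ∀ u v : ℝ, Fcum A.fminus v - Fcum A.fminus u = ∫ ξ in u..v, A.fminus ξ :=
    fun u v => intervalIntegral.integral_interval_sub_left (hInt 0 v) (hInt 0 u)
  have hFmmono : ∀ u v : ℝ, u ≤ v → Fcum A.fminus u ≤ Fcum A.fminus v := by
    intro u v huv
    have h1 := intervalIntegral.integral_nonneg (μ := volume) huv (fun x _ => A.fminus_nonneg x)
    have h2 := hFm u v
    linarith
  have hFpmono : ∀ u v : ℝ, u ≤ v → Fcum A.fplus u ≤ Fcum A.fplus v := by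
    intro u v huv
    have h1 := intervalIntegral.integral_nonneg (μ := volume) huv (fun x _ => A.fplus_nonneg x)
    have h2 : Fcum A.fplus v - Fcum A.fplus u = ∫ ξ in u..v, A.fplus ξ :=
      intervalIntegral.integral_interval_sub_left (hIntp 0 v) (hIntp 0 u)
    linarith
  set G : ℝ → ℝ := fun t => ∫ ξ in a..(a + t), A.fminus ξ with hG
  have hGcont : Continuous G := by
    rw [hG]
    exact (intervalIntegral.continuous_primitive hInt a).comp (continuous_const.add continuous_id)
  have hG0 : G 0 = 0 := by simp [hG]
  have hGmono : ∀ s t : ℝ, s ≤ t → G s ≤ G t := by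
    intro s t hst
    have hadd := intervalIntegral.integral_add_adjacent_intervals (hInt a (a + s)) (hInt (a + s) (a + t))
    have hnn := intervalIntegral.integral_nonneg (μ := volume)
      (by linarith : a + s ≤ a + t) (fun x _ => A.fminus_nonneg x)
    simp only [hG]
    linarith
  have hGz : ∀ t : ℝ, Fcum A.fminus (a + t) = Fcum A.fminus a + G t := by
    intro t
    have h := hFm a (a + t)
    simp only [hG]
    linarith
  have hzx : ∀ x : ℝ, A.z x = Fcum A.fplus (x - A.τ) - Fcum A.fminus x := fun x => rfl
  have haτ : a - A.τ = θ₂ := by rw [ha]; ring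
  have hbτ : b - A.τ = θ₁ := by rw [hb]; ring
  have hza : A.z a = Fcum A.fplus θ₂ - Fcum A.fminus a := by rw [hzx a, haτ]
  have hzb : A.z b = Fcum A.fplus θ₁ - Fcum A.fminus b := by rw [hzx b, hbτ]
  have hFeq : Fcum A.fplus θ₂ = Fcum A.fplus θ₁ := by
    have h := hF
    simp only [Arc.Fplus] at h
    linarith
  -- queue lower bound after time a
  have hzlb : ∀ t : ℝ, 0 ≤ t → A.z a - G t ≤ A.z (a + t) := by
    intro t ht
    have h1 := hFpmono (a - A.τ) (a + t - A.τ) (by linarith)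
    have h2 := hGz t
    have h3 := hzx (a + t)
    linarith [hza, haτ ▸ h1]
  -- existence of a root of G
  have hw0 : (0:ℝ) ≤ A.z a / A.ε := div_nonneg hz.le A.ε_pos.le
  have hGw : A.z a ≤ G (A.z a / A.ε) := by
    by_contra hlt
    push_neg at hlt
    have hf : ∀ x ∈ Set.Icc a (a + A.z a / A.ε), A.ε ≤ A.fminus x := by
      intro x hx
      apply A.outflow_lb
      have hs0 : 0 ≤ x - a := by linarith [hx.1]
      have hsw : x - a ≤ A.z a / A.ε := by linarith [hx.2]
      have h1 := hzlb (x - a) hs0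
      rw [show a + (x - a) = x by ring] at h1
      have h2 := hGmono (x - a) (A.z a / A.ε) hsw
      show 0 < A.z x
      linarith
    have hεint := intervalIntegral.integral_mono_on (μ := volume)
      (by linarith : a ≤ a + A.z a / A.ε) (intervalIntegrable_const) (hInt a (a + A.z a / A.ε)) hf
    rw [intervalIntegral.integral_const] at hεint
    rw [show a + A.z a / A.ε - a = A.z a / A.ε by ring, smul_eq_mul] at hεint
    rw [div_mul_cancel₀ _ (ne_of_gt A.ε_pos)] at hεint
    have : G (A.z a / A.ε) = ∫ ξ in a..(a + A.z a / A.ε), A.fminus ξ := by simp only [hG]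
    linarith
  obtain ⟨t0, ht0, hGt0⟩ := intermediate_value_Icc hw0 hGcont.continuousOn
    ⟨by rw [hG0]; exact hz.le, hGw⟩
  set S₂ : Set ℝ := {q : ℝ | 0 ≤ q ∧ G q = A.z a} with hS₂
  have hS₂closed : IsClosed S₂ :=
    (isClosed_Ici.preimage continuous_id).inter (isClosed_eq hGcont continuous_const)
  have hS₂bdd : BddBelow S₂ := ⟨0, fun x hx => hx.1⟩
  have hS₂ne : S₂.Nonempty := ⟨t0, ht0.1, hGt0⟩
  have hq₂mem := hS₂closed.csInf_mem hS₂ne hS₂bdd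
  set q₂ := sInf S₂ with hq₂
  have hq₂eq : A.q θ₂ = q₂ := rfl
  -- minimality fact for q₂
  have hGlt : ∀ t : ℝ, 0 ≤ t → t < q₂ → G t < A.z a := by
    intro t ht htq
    by_contra hge
    push_neg at hge
    obtain ⟨t', ht', hGt'⟩ := intermediate_value_Icc ht hGcont.continuousOn
      ⟨by rw [hG0]; exact hz.le, hge⟩
    have : q₂ ≤ t' := csInf_le hS₂bdd ⟨ht'.1, hGt'⟩
    linarith [ht'.2]
  -- the candidate waiting time for θ₁
  set q' := q₂ + (θ₂ - θ₁) with hq'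
  have hbq' : b + q' = a + q₂ := by rw [ha, hb, hq']; ring
  have hq'nn : 0 ≤ q' := by
    have := hq₂mem.1
    rw [hq']; linarith
  have hHq' : (∫ ξ in b..(b + q'), A.fminus ξ) = A.z b := by
    rw [hbq',
      ← intervalIntegral.integral_add_adjacent_intervals (hInt b a) (hInt a (a + q₂))]
    have h1 : (∫ ξ in b..a, A.fminus ξ) = Fcum A.fminus a - Fcum A.fminus b := (hFm b a).symm
    have h2 : (∫ ξ in a..(a + q₂), A.fminus ξ) = A.z a := hq₂mem.2
    rw [h1, h2]
    linarith [hza, hzb, hFeq]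
  set S₁ : Set ℝ := {q : ℝ | 0 ≤ q ∧ (∫ ξ in b..(b + q), A.fminus ξ) = A.z b} with hS₁
  have hq'mem : q' ∈ S₁ := ⟨hq'nn, hHq'⟩
  have hS₁bdd : BddBelow S₁ := ⟨0, fun x hx => hx.1⟩
  have hq₁eq : A.q θ₁ = sInf S₁ := rfl
  -- queue positivity on [0, q')
  have hzpos : ∀ s : ℝ, 0 ≤ s → s < q' → 0 < A.z (b + s) := by
    intro s hs hsq
    rcases le_or_gt s (θ₂ - θ₁) with hcase | hcase
    · have h3 := hzx (b + s)
      rw [show b + s - A.τ = θ₁ + s by rw [hb]; ring] at h3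
      have h5 := hFpmono θ₁ (θ₁ + s) (by linarith)
      have h6 := hFmmono (b + s) a (by rw [ha, hb]; linarith)
      linarith [hza, hFeq]
    · have ht := hzlb (s - (θ₂ - θ₁)) (by linarith)
      rw [show a + (s - (θ₂ - θ₁)) = b + s by rw [ha, hb]; ring] at ht
      have h8 := hGlt (s - (θ₂ - θ₁)) (by linarith) (by rw [hq'] at hsq; linarith)
      linarith
  -- minimality of q'
  have hmin : ∀ p ∈ S₁, q' ≤ p := by
    intro p hp
    by_contra hlt
    push_neg at hlt
    set m := (p + q') / 2 with hm
    have hpm : p < m := by rw [hm]; linarith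
    have hmq : m < q' := by rw [hm]; linarith
    have hadd1 := intervalIntegral.integral_add_adjacent_intervals
      (hInt b (b + p)) (hInt (b + p) (b + m))
    have hadd2 := intervalIntegral.integral_add_adjacent_intervals
      (hInt b (b + m)) (hInt (b + m) (b + q'))
    have hn2 := intervalIntegral.integral_nonneg (μ := volume)
      (by linarith : b + m ≤ b + q') (fun x _ => A.fminus_nonneg x)
    have hεm : (∫ ξ in (b + p)..(b + m), A.ε) ≤ ∫ ξ in (b + p)..(b + m), A.fminus ξ := by
      apply intervalIntegral.integral_mono_on (by linarith : b + p ≤ b + m)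
        intervalIntegrable_const (hInt _ _)
      intro x hx
      apply A.outflow_lb
      have h1 := hzpos (x - b) (by linarith [hx.1, hp.1]) (by linarith [hx.2])
      rw [show b + (x - b) = x by ring] at h1
      exact h1
    rw [intervalIntegral.integral_const, show b + m - (b + p) = m - p by ring,
      smul_eq_mul] at hεm
    have hpos : 0 < (m - p) * A.ε := mul_pos (by linarith) A.ε_pos
    linarith [hp.2, hHq', hadd1, hadd2, hn2, hεm]
  have hq₁ : A.q θ₁ = q' :=
    hq₁eq.trans (le_antisymm (csInf_le hS₁bdd hq'mem) (le_csInf ⟨q', hq'mem⟩ hmin))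
  constructor
  · rw [hq₁, hq₂eq, hq']; ring
  · simp only [Arc.T]
    rw [hq₁, hq₂eq, hq']; ring
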